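/- Let G be a finite simple graph with arboricity at most α, let 0 < ε ≤ 1, set Δ = 5(5/ε + 1)·2α, and let G_Δ be the bounded-degree matching sparsifier (each vertex marks up to Δ incident edges, vertices of degree < Δ mark all, and G_Δ keeps edges marked by both endpoints). If M is an η-maximal matching of G_Δ (at most η·|M| edges of G_Δ can be added to M while keeping it a matching of G_Δ), then M is an (ε + 3η)-maximal matching of G: at most (ε + 3η)·|M| edges of G can be added to M while keeping it a matching of G. -/

import Mathlib

open Finset SimpleGraph

/-- `N` is a matching using only edges from the edge set `s`:
its members lie in `s` and are pairwise vertex-disjoint. -/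
def IsMatchingIn {V : Type*} (s : Set (Sym2 V)) (N : Finset (Sym2 V)) : Prop :=
  (↑N : Set (Sym2 V)) ⊆ s ∧
    ∀ e ∈ N, ∀ f ∈ N, e ≠ f → ∀ v : V, v ∈ e → v ∉ f

theorem stmt_15 {V : Type*} [Fintype V] [DecidableEq V]
    (G : SimpleGraph V) [DecidableRel G.Adj]
    (α ε η : ℝ) (hα : 1 ≤ α) (hε0 : 0 < ε) (hε1 : ε ≤ 1) (hη : 0 < η)
    (Δ : ℕ) (hΔ : 5 * (5 / ε + 1) * (2 * α) ≤ (Δ : ℝ))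
    -- arboricity at most α
    (harb : ∀ S : Finset V, 2 ≤ S.card →
      ((G.edgeFinset.filter fun e => ∀ v ∈ e, v ∈ S).card : ℝ) ≤ α * ((S.card : ℝ) - 1))
    -- each vertex marks up to Δ incident edges
    (M : V → Finset (Sym2 V))
    (hMinc : ∀ v : V, M v ⊆ G.incidenceFinset v)
    (hMcard : ∀ v : V, (M v).card ≤ Δ)
    (hMlow : ∀ v : V, G.degree v < Δ → M v = G.incidenceFinset v)
    (hMhigh : ∀ v : V, Δ ≤ G.degree v → (M v).card = Δ)
    -- Mm is an η-maximal matching of G_Δ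
    (Mm : Finset (Sym2 V))
    (hMm : IsMatchingIn {e | e ∈ G.edgeSet ∧ ∀ v ∈ e, e ∈ M v} Mm)
    (hηmax : ∀ Mm' : Finset (Sym2 V),
      IsMatchingIn {e | e ∈ G.edgeSet ∧ ∀ v ∈ e, e ∈ M v} Mm' → Mm ⊆ Mm' →
      ((Mm' \ Mm).card : ℝ) ≤ η * (Mm.card : ℝ)) :
    -- then Mm is an (ε + 3η)-maximal matching of G
    ∀ Mm' : Finset (Sym2 V), IsMatchingIn G.edgeSet Mm' → Mm ⊆ Mm' →
      ((Mm' \ Mm).card : ℝ) ≤ (ε + 3 * η) * (Mm.card : ℝ) := by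
  classical
  intro Mm' hMm' hsub
  set GD : Set (Sym2 V) := {e | e ∈ G.edgeSet ∧ ∀ v ∈ e, e ∈ M v} with hGD
  set m : ℝ := (Mm.card : ℝ) with hm
  have hm0 : 0 ≤ m := by positivity
  have hα0 : (0:ℝ) < α := lt_of_lt_of_le one_pos hα
  have hΔ' : 50 * α / ε + 10 * α ≤ (Δ:ℝ) := by
    have : 5 * (5 / ε + 1) * (2 * α) = 50 * α / ε + 10 * α := by
      field_simp; ring
    linarith [hΔ]
  -- at most two vertices lie in a Sym2
  have hmem2 : ∀ e : Sym2 V, (univ.filter (· ∈ e) : Finset V).card ≤ 2 := by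
    intro e
    induction e using Sym2.ind with
    | _ a b =>
      have hsub2 : (univ.filter (· ∈ s(a,b)) : Finset V) ⊆ {a, b} := by
        intro x hx
        simp only [mem_filter, Sym2.mem_iff] at hx
        simp [hx.2]
      exact le_trans (Finset.card_le_card hsub2)
        (le_trans (Finset.card_insert_le a {b}) (by simp))
  -- edges inside a vertex set
  set EIn : Finset V → Finset (Sym2 V) :=
    fun S => G.edgeFinset.filter (fun e => ∀ v ∈ e, v ∈ S) with hEIn
  have harb' : ∀ S : Finset V, ((EIn S).card : ℝ) ≤ α * S.card := by
    intro S
    by_cases h2 : 2 ≤ S.card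
    · have h1 := harb S h2
      have : α * ((S.card : ℝ) - 1) ≤ α * S.card := by nlinarith
      exact le_trans h1 this
    · have hempty : EIn S = ∅ := by
        rw [Finset.eq_empty_iff_forall_notMem]
        intro e he
        simp only [hEIn, mem_filter, mem_edgeFinset] at he
        obtain ⟨heE, hin⟩ := he
        revert heE hin
        induction e using Sym2.ind with
        | _ a b =>
          intro heE hin
          have hab : a ≠ b := (G.ne_of_adj (by rwa [mem_edgeSet] at heE))
          have : ({a, b} : Finset V) ⊆ S := by
            intro x hx
            rcases Finset.mem_insert.mp hx with rfl | hx
            · exact hin x (by simp)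
            · rw [Finset.mem_singleton] at hx; subst hx
              exact hin x (by simp)
          have := Finset.card_le_card this
          rw [Finset.card_pair hab] at this
          omega
      rw [hempty]
      simp only [Finset.card_empty, Nat.cast_zero]
      positivity
  -- double counting of marked edges inside S
  have hdouble : ∀ (T S : Finset V),
      (∀ x ∈ T, Δ ≤ G.degree x) → (∀ x ∈ T, M x ⊆ EIn S) →
      (T.card : ℝ) * Δ ≤ 2 * α * S.card := by
    intro T S hhigh hsubTS
    have key : T.card * Δ ≤ 2 * (EIn S).card := by
      have h1 : ∀ x ∈ T, (M x).card = ((EIn S).filter (· ∈ M x)).card := by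
        intro x hx
        rw [Finset.filter_mem_eq_inter, Finset.inter_eq_right.mpr (hsubTS x hx)]
      calc T.card * Δ = ∑ _x ∈ T, Δ := by rw [Finset.sum_const, smul_eq_mul]
        _ = ∑ x ∈ T, (M x).card := by
            refine Finset.sum_congr rfl fun x hx => ?_
            rw [hMhigh x (hhigh x hx)]
        _ = ∑ x ∈ T, ((EIn S).filter (· ∈ M x)).card :=
            Finset.sum_congr rfl h1
        _ = ∑ x ∈ T, ∑ e ∈ EIn S, if e ∈ M x then 1 else 0 := by
            refine Finset.sum_congr rfl fun x _ => ?_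
            rw [Finset.card_filter]
        _ = ∑ e ∈ EIn S, ∑ x ∈ T, if e ∈ M x then 1 else 0 := Finset.sum_comm
        _ ≤ ∑ _e ∈ EIn S, 2 := by
            refine Finset.sum_le_sum fun e _ => ?_
            have : (∑ x ∈ T, if e ∈ M x then 1 else 0)
                = (T.filter (fun x => e ∈ M x)).card := (Finset.card_filter _ _).symm
            rw [this]
            refine le_trans (Finset.card_le_card ?_) (hmem2 e)
            intro x hx
            rw [Finset.mem_filter] at hx
            have := hMinc x hx.2
            rw [mem_incidenceFinset] at this
            exact Finset.mem_filter.mpr ⟨Finset.mem_univ x, this.2⟩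
        _ = 2 * (EIn S).card := by rw [Finset.sum_const, smul_eq_mul, mul_comm]
    have key' : (T.card : ℝ) * Δ ≤ 2 * (EIn S).card := by exact_mod_cast key
    calc (T.card : ℝ) * Δ ≤ 2 * (EIn S).card := key'
      _ ≤ 2 * (α * S.card) := by
          have := harb' S
          nlinarith
      _ = 2 * α * S.card := by ring
  -- any matching in GD whose vertices avoid Mm can be added: it has size ≤ η m
  have hext : ∀ N : Finset (Sym2 V), (↑N : Set (Sym2 V)) ⊆ GD →
      (∀ e ∈ N, ∀ v ∈ e, ∀ f ∈ Mm, v ∉ f) →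
      (∀ e ∈ N, ∀ f ∈ N, e ≠ f → ∀ v : V, v ∈ e → v ∉ f) →
      (N.card : ℝ) ≤ η * m := by
    intro N hNGD hNun hNmatch
    have hdisj : ∀ e ∈ N, e ∉ Mm := by
      intro e he hem
      exact hNun e he e.out.1 (Sym2.out_fst_mem e) e hem (Sym2.out_fst_mem e)
    have hmatch : IsMatchingIn GD (Mm ∪ N) := by
      constructor
      · intro e he
        rcases Finset.mem_union.mp (Finset.mem_coe.mp he) with h | h
        · exact hMm.1 (Finset.mem_coe.mpr h)
        · exact hNGD (Finset.mem_coe.mpr h)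
      · intro e he f hf hne v hv
        rcases Finset.mem_union.mp he with he' | he' <;>
          rcases Finset.mem_union.mp hf with hf' | hf'
        · exact hMm.2 e he' f hf' hne v hv
        · intro hvf; exact hNun f hf' v hvf e he' hv
        · exact hNun e he' v hv f hf'
        · exact hNmatch e he' f hf' hne v hv
    have h := hηmax (Mm ∪ N) hmatch Finset.subset_union_left
    rw [Finset.union_sdiff_left] at h
    have hNd : N \ Mm = N := by
      rw [Finset.sdiff_eq_self_iff_disjoint]
      exact Finset.disjoint_left.mpr hdisj
    rwa [hNd] at h
  -- split F
  set F : Finset (Sym2 V) := Mm' \ Mm with hF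
  set F₁ : Finset (Sym2 V) := F.filter (· ∈ GD) with hF₁
  have hFsub : F ⊆ Mm' := Finset.sdiff_subset
  have hMm'E : ∀ e ∈ Mm', e ∈ G.edgeSet := fun e he => hMm'.1 (Finset.mem_coe.mpr he)
  -- unmatched
  have hFun : ∀ e ∈ F, ∀ v ∈ e, ∀ f ∈ Mm, v ∉ f := by
    intro e heF v hv f hf hvf
    have hne : e ≠ f := by
      rintro rfl
      exact (Finset.mem_sdiff.mp heF).2 hf
    exact hMm'.2 e (hFsub heF) f (hsub hf) hne v hv hvf
  have hF₁le : (F₁.card : ℝ) ≤ η * m := by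
    refine hext F₁ ?_ ?_ ?_
    · intro e he
      exact (Finset.mem_filter.mp (Finset.mem_coe.mp he)).2
    · intro e he v hv f hf
      exact hFun e (Finset.filter_subset _ _ he) v hv f hf
    · intro e he f hf hne v hv
      exact hMm'.2 e (hFsub (Finset.filter_subset _ _ he))
        f (hFsub (Finset.filter_subset _ _ hf)) hne v hv
  -- high-degree unmatched vertices
  set X : Finset V := univ.filter (fun x => Δ ≤ G.degree x ∧ ∀ f ∈ Mm, x ∉ f) with hX
  set UL : Finset V := univ.filter (fun u => G.degree u < Δ ∧ ∀ f ∈ Mm, u ∉ f) with hUL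
  -- each F₂ edge has an endpoint in X
  set F₂ : Finset (Sym2 V) := F \ F₁ with hF₂
  have hF₂x : ∀ e ∈ F₂, ∃ x, x ∈ X ∧ x ∈ e := by
    intro e he
    obtain ⟨heF, heGD⟩ := Finset.mem_sdiff.mp he
    have heE : e ∈ G.edgeSet := hMm'E e (hFsub heF)
    have hnotGD : e ∉ GD := fun h => heGD (Finset.mem_filter.mpr ⟨heF, h⟩)
    have hexv : ∃ v ∈ e, e ∉ M v := by
      by_contra hc
      push_neg at hc
      exact hnotGD ⟨heE, hc⟩
    obtain ⟨x, hxe, hxM⟩ := hexv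
    have hhigh : Δ ≤ G.degree x := by
      by_contra h
      push_neg at h
      apply hxM
      rw [hMlow x h, mem_incidenceFinset]
      exact ⟨heE, hxe⟩
    exact ⟨x, Finset.mem_filter.mpr ⟨Finset.mem_univ x, hhigh, hFun e heF x hxe⟩, hxe⟩
  have hF₂le : F₂.card ≤ X.card := by
    set pick : Sym2 V → V :=
      fun e => if h : ∃ x, x ∈ X ∧ x ∈ e then h.choose else e.out.1 with hpick
    have hpick1 : ∀ e ∈ F₂, pick e ∈ X ∧ pick e ∈ e := by
      intro e he
      have h := hF₂x e he
      simp only [hpick, dif_pos h]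
      exact h.choose_spec
    refine Finset.card_le_card_of_injOn pick (fun e he => (hpick1 e he).1) ?_
    intro e1 h1 e2 h2 heq
    by_contra hne
    have hx1 := (hpick1 e1 (Finset.mem_coe.mp h1)).2
    have hx2 := (hpick1 e2 (Finset.mem_coe.mp h2)).2
    rw [heq] at hx1
    have he1 : e1 ∈ Mm' := hFsub (Finset.sdiff_subset (Finset.mem_coe.mp h1))
    have he2 : e2 ∈ Mm' := hFsub (Finset.sdiff_subset (Finset.mem_coe.mp h2))
    exact hMm'.2 e1 he1 e2 he2 hne (pick e2) hx1 hx2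
  -- the addable bipartite graph between X and UL
  set Astar : Finset (Sym2 V) :=
    G.edgeFinset.filter (fun e => e ∈ GD ∧ ∃ x, x ∈ X ∧ ∃ u, u ∈ UL ∧ e = s(x,u)) with hAstar
  -- a maximal matching N inside Astar
  set 𝒩 : Finset (Finset (Sym2 V)) :=
    Astar.powerset.filter
      (fun N => ∀ e ∈ N, ∀ f ∈ N, e ≠ f → ∀ v : V, v ∈ e → v ∉ f) with h𝒩
  have hne𝒩 : 𝒩.Nonempty := ⟨∅, by simp [h𝒩]⟩
  obtain ⟨N, hN𝒩, hNmax⟩ : ∃ N ∈ 𝒩, ∀ x ∈ 𝒩, ¬ N < x := by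
    obtain ⟨N, hN⟩ := Finset.exists_maximal hne𝒩
    exact ⟨N, hN.1, fun x hx hlt => hlt.not_ge (hN.2 hx hlt.le)⟩
  have hNsub : N ⊆ Astar := Finset.mem_powerset.mp (Finset.mem_filter.mp hN𝒩).1
  have hNmatch : ∀ e ∈ N, ∀ f ∈ N, e ≠ f → ∀ v : V, v ∈ e → v ∉ f :=
    (Finset.mem_filter.mp hN𝒩).2
  have hNcover : ∀ e ∈ Astar, ∃ f ∈ N, ∃ v, v ∈ e ∧ v ∈ f := by
    intro e he
    by_cases heN : e ∈ N
    · exact ⟨e, heN, e.out.1, Sym2.out_fst_mem e, Sym2.out_fst_mem e⟩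
    by_contra hc
    push_neg at hc
    have hins : insert e N ∈ 𝒩 := by
      rw [h𝒩, Finset.mem_filter, Finset.mem_powerset]
      refine ⟨Finset.insert_subset he hNsub, ?_⟩
      intro e1 h1 e2 h2 hne v hv
      rcases Finset.mem_insert.mp h1 with he1 | hN1
      · rcases Finset.mem_insert.mp h2 with he2 | hN2
        · exact absurd (he1.trans he2.symm) hne
        · subst he1; exact hc e2 hN2 v hv
      · rcases Finset.mem_insert.mp h2 with he2 | hN2
        · subst he2; intro hve; exact hc e1 hN1 v hve hv
        · exact hNmatch e1 hN1 e2 hN2 hne v hv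
    exact hNmax _ hins (Finset.ssubset_insert heN)
  -- structure of Astar edges
  have hAshape : ∀ e ∈ Astar, e ∈ GD ∧ ∃ x, x ∈ X ∧ ∃ u, u ∈ UL ∧ e = s(x,u) :=
    fun e he => (Finset.mem_filter.mp he).2
  have hXUL : ∀ v, v ∈ X → v ∈ UL → False := by
    intro v hv hu
    have h1 := (Finset.mem_filter.mp hv).2.1
    have h2 := (Finset.mem_filter.mp hu).2.1
    omega
  -- N extends Mm, so |N| ≤ η m
  have hNle : (N.card : ℝ) ≤ η * m := by
    refine hext N ?_ ?_ hNmatch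
    · intro e he
      exact (hAshape e (hNsub (Finset.mem_coe.mp he))).1
    · intro e he v hv f hf hvf
      obtain ⟨-, x, hxX, u, huU, rfl⟩ := hAshape e (hNsub he)
      rcases Sym2.mem_iff.mp hv with rfl | rfl
      · exact (Finset.mem_filter.mp hxX).2.2 f hf hvf
      · exact (Finset.mem_filter.mp huU).2.2 f hf hvf
  -- covers
  set CX : Finset V := X.filter (fun x => ∃ f ∈ N, x ∈ f) with hCX
  set CU : Finset V := UL.filter (fun u => ∃ f ∈ N, u ∈ f) with hCU
  have huniqX : ∀ f ∈ N, ∀ x1 ∈ X, ∀ x2 ∈ X, x1 ∈ f → x2 ∈ f → x1 = x2 := by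
    intro f hf x1 hx1 x2 hx2 h1 h2
    obtain ⟨-, x, hxX, u, huU, rfl⟩ := hAshape f (hNsub hf)
    rcases Sym2.mem_iff.mp h1 with rfl | rfl
    · rcases Sym2.mem_iff.mp h2 with rfl | rfl
      · rfl
      · exact absurd huU (fun h => hXUL x2 hx2 h)
    · exact absurd huU (fun h => hXUL x1 hx1 h)
  have huniqU : ∀ f ∈ N, ∀ u1 ∈ UL, ∀ u2 ∈ UL, u1 ∈ f → u2 ∈ f → u1 = u2 := by
    intro f hf u1 hu1 u2 hu2 h1 h2
    obtain ⟨-, x, hxX, u, huU, rfl⟩ := hAshape f (hNsub hf)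
    rcases Sym2.mem_iff.mp h1 with rfl | rfl
    · exact absurd hxX (fun h => hXUL u1 h hu1)
    · rcases Sym2.mem_iff.mp h2 with rfl | rfl
      · exact absurd hxX (fun h => hXUL u2 h hu2)
      · rfl
  have hCXle : CX.card ≤ N.card := by
    set pf : V → Sym2 V :=
      fun x => if h : ∃ f ∈ N, x ∈ f then h.choose else s(x,x) with hpf
    have hpf1 : ∀ x ∈ CX, pf x ∈ N ∧ x ∈ pf x := by
      intro x hx
      have h := (Finset.mem_filter.mp hx).2
      simp only [hpf, dif_pos h]
      exact ⟨h.choose_spec.1, h.choose_spec.2⟩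
    refine Finset.card_le_card_of_injOn pf (fun x hx => (hpf1 x hx).1) ?_
    intro x1 h1 x2 h2 heq
    have hm1 := hpf1 x1 (Finset.mem_coe.mp h1)
    have hm2 := hpf1 x2 (Finset.mem_coe.mp h2)
    rw [heq] at hm1
    exact huniqX (pf x2) hm2.1
      x1 (Finset.filter_subset _ _ (Finset.mem_coe.mp h1))
      x2 (Finset.filter_subset _ _ (Finset.mem_coe.mp h2)) hm1.2 hm2.2
  have hCUle : CU.card ≤ N.card := by
    set pf : V → Sym2 V :=
      fun x => if h : ∃ f ∈ N, x ∈ f then h.choose else s(x,x) with hpf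
    have hpf1 : ∀ x ∈ CU, pf x ∈ N ∧ x ∈ pf x := by
      intro x hx
      have h := (Finset.mem_filter.mp hx).2
      simp only [hpf, dif_pos h]
      exact ⟨h.choose_spec.1, h.choose_spec.2⟩
    refine Finset.card_le_card_of_injOn pf (fun x hx => (hpf1 x hx).1) ?_
    intro x1 h1 x2 h2 heq
    have hm1 := hpf1 x1 (Finset.mem_coe.mp h1)
    have hm2 := hpf1 x2 (Finset.mem_coe.mp h2)
    rw [heq] at hm1
    exact huniqU (pf x2) hm2.1
      x1 (Finset.filter_subset _ _ (Finset.mem_coe.mp h1))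
      x2 (Finset.filter_subset _ _ (Finset.mem_coe.mp h2)) hm1.2 hm2.2
  -- matched vertices
  set MV : Finset V := univ.filter (fun v => ∃ f ∈ Mm, v ∈ f) with hMV
  have hMVle : (MV.card : ℝ) ≤ 2 * m := by
    have hsubMV : MV ⊆ Mm.biUnion (fun f => univ.filter (· ∈ f)) := by
      intro v hv
      obtain ⟨f, hf, hvf⟩ := (Finset.mem_filter.mp hv).2
      exact Finset.mem_biUnion.mpr ⟨f, hf, Finset.mem_filter.mpr ⟨Finset.mem_univ v, hvf⟩⟩
    have h1 : MV.card ≤ 2 * Mm.card := by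
      calc MV.card ≤ (Mm.biUnion (fun f => univ.filter (· ∈ f))).card :=
            Finset.card_le_card hsubMV
        _ ≤ ∑ f ∈ Mm, (univ.filter (· ∈ f)).card := Finset.card_biUnion_le
        _ ≤ ∑ _f ∈ Mm, 2 := Finset.sum_le_sum (fun f _ => hmem2 f)
        _ = 2 * Mm.card := by rw [Finset.sum_const, smul_eq_mul, mul_comm]
    calc (MV.card : ℝ) ≤ (2 * Mm.card : ℕ) := by exact_mod_cast h1
      _ = 2 * m := by push_cast [hm]; ring
  -- the uncovered part of X
  set X₂ : Finset V := X \ CX with hX₂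
  have hXsplit : X.card ≤ CX.card + X₂.card := by
    have h : X₂.card + CX.card = X.card := by
      rw [hX₂]
      exact Finset.card_sdiff_add_card_eq_card (show CX ⊆ X from Finset.filter_subset _ _)
    omega
  -- all marked edges of X₂ vertices stay inside S
  set S : Finset V := (X ∪ MV) ∪ CU with hS
  have hkey : ∀ x ∈ X₂, M x ⊆ EIn S := by
    intro x hx e he
    have hxX : x ∈ X := (Finset.mem_sdiff.mp hx).1
    have hxC : x ∉ CX := (Finset.mem_sdiff.mp hx).2
    have hinc := hMinc x he
    rw [mem_incidenceFinset] at hinc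
    obtain ⟨heE, hxe⟩ := hinc
    simp only [hEIn]
    refine Finset.mem_filter.mpr ⟨mem_edgeFinset.mpr heE, ?_⟩
    intro v hv
    by_cases hvx : v = x
    · subst hvx
      exact Finset.mem_union_left _ (Finset.mem_union_left _ hxX)
    have hexv : e = s(x,v) := (Sym2.mem_and_mem_iff (fun h => hvx h.symm)).mp ⟨hxe, hv⟩
    by_cases hvm : ∀ f ∈ Mm, v ∉ f
    · by_cases hvd : Δ ≤ G.degree v
      · exact Finset.mem_union_left _ (Finset.mem_union_left _
          (Finset.mem_filter.mpr ⟨Finset.mem_univ v, hvd, hvm⟩))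
      · push_neg at hvd
        have hvUL : v ∈ UL := Finset.mem_filter.mpr ⟨Finset.mem_univ v, hvd, hvm⟩
        have heGD : e ∈ GD := by
          refine ⟨heE, ?_⟩
          intro w hw
          rw [hexv] at hw
          rcases Sym2.mem_iff.mp hw with rfl | rfl
          · exact he
          · rw [hMlow w hvd, mem_incidenceFinset]
            exact ⟨heE, hv⟩
        have heA : e ∈ Astar := by
          rw [hAstar]
          exact Finset.mem_filter.mpr
            ⟨mem_edgeFinset.mpr heE, heGD, x, hxX, v, hvUL, hexv⟩
        obtain ⟨f, hfN, w, hwe, hwf⟩ := hNcover e heA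
        rw [hexv] at hwe
        rcases Sym2.mem_iff.mp hwe with rfl | rfl
        · exact absurd (Finset.mem_filter.mpr ⟨hxX, f, hfN, hwf⟩) hxC
        · exact Finset.mem_union_right _ (Finset.mem_filter.mpr ⟨hvUL, f, hfN, hwf⟩)
    · push_neg at hvm
      obtain ⟨f, hf, hvf⟩ := hvm
      exact Finset.mem_union_left _ (Finset.mem_union_right _
        (Finset.mem_filter.mpr ⟨Finset.mem_univ v, f, hf, hvf⟩))
  -- counting
  have hX₂high : ∀ x ∈ X₂, Δ ≤ G.degree x :=
    fun x hx => (Finset.mem_filter.mp (Finset.mem_sdiff.mp hx).1).2.1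
  have hcount : (X₂.card : ℝ) * Δ ≤ 2 * α * S.card := hdouble X₂ S hX₂high hkey
  have hScard : (S.card : ℝ) ≤ X.card + 2 * m + N.card := by
    have h1 : S.card ≤ X.card + MV.card + CU.card := by
      calc S.card ≤ (X ∪ MV).card + CU.card := Finset.card_union_le _ _
        _ ≤ X.card + MV.card + CU.card := by
            have := Finset.card_union_le X MV
            omega
    have h2 : (S.card : ℝ) ≤ (X.card : ℝ) + MV.card + CU.card := by exact_mod_cast h1
    have h3 : (CU.card : ℝ) ≤ N.card := by exact_mod_cast hCUle
    linarith
  have hXr : (X.card : ℝ) ≤ η * m + X₂.card := by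
    have h1 : (X.card : ℝ) ≤ (CX.card : ℝ) + X₂.card := by exact_mod_cast hXsplit
    have h2 : (CX.card : ℝ) ≤ (N.card : ℝ) := by exact_mod_cast hCXle
    linarith
  set x₂ : ℝ := (X₂.card : ℝ) with hx₂def
  have hx₂0 : 0 ≤ x₂ := by rw [hx₂def]; exact Nat.cast_nonneg _
  have h2α : (0:ℝ) ≤ 2 * α := by linarith
  have hf' : x₂ * Δ ≤ 2 * α * ((X.card : ℝ) + 2 * m + N.card) :=
    le_trans hcount (mul_le_mul_of_nonneg_left hScard h2α)
  have he1 : 2 * α * (X.card : ℝ) ≤ 2 * α * (η * m + x₂) :=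
    mul_le_mul_of_nonneg_left hXr h2α
  have he2 : 2 * α * (N.card : ℝ) ≤ 2 * α * (η * m) :=
    mul_le_mul_of_nonneg_left hNle h2α
  have hx₂Δ : x₂ * Δ ≤ 2 * α * x₂ + 4 * α * η * m + 4 * α * m := by
    linarith [hf', he1, he2]
  have hΔ2α : 50 * α / ε ≤ (Δ:ℝ) - 2 * α := by linarith [hΔ', hα0]
  have h3a : x₂ * (50 * α / ε) ≤ x₂ * ((Δ:ℝ) - 2 * α) :=
    mul_le_mul_of_nonneg_left hΔ2α hx₂0
  have h3 : x₂ * (50 * α / ε) ≤ 4 * α * η * m + 4 * α * m := by linarith [h3a, hx₂Δ]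
  have h4 : 50 * x₂ * α ≤ (4 * α * η * m + 4 * α * m) * ε := by
    have h := mul_le_mul_of_nonneg_right h3 hε0.le
    have heq : x₂ * (50 * α / ε) * ε = 50 * x₂ * α := by field_simp
    linarith [h, heq.le, heq.ge]
  have h5 : 50 * x₂ ≤ 4 * ε * η * m + 4 * ε * m := by
    have h4' : α * (50 * x₂) ≤ α * (4 * ε * η * m + 4 * ε * m) := by linarith [h4]
    exact (mul_le_mul_iff_right₀ hα0).mp h4'
  have hx₂final : x₂ ≤ (ε + η) * m := by
    linarith [h5, mul_nonneg (mul_nonneg (sub_nonneg.mpr hε1) hη.le) hm0,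
      mul_nonneg hε0.le hm0, mul_nonneg hη.le hm0]
  -- put everything together
  have hFcard : (F.card : ℝ) = (F₁.card : ℝ) + (F₂.card : ℝ) := by
    have h : F₂.card + F₁.card = F.card := by
      rw [hF₂]
      exact Finset.card_sdiff_add_card_eq_card (show F₁ ⊆ F from Finset.filter_subset _ _)
    have h' : F.card = F₁.card + F₂.card := by omega
    exact_mod_cast h'
  have hF₂r : (F₂.card : ℝ) ≤ (X.card : ℝ) := by exact_mod_cast hF₂le
  linarith [hFcard, hF₁le, hF₂r, hXr, hx₂final]
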